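/- Let ℓ = k^s be an odd prime power (k an odd prime, s a positive integer), let p be a prime and let q be a positive integer such that p > q, p ≠ k and k ∤ (p − 1). If n is a positive integer with p − q ≤ n ≤ 2p − q − 1, then the p-adic valuation of the product (1^ℓ + q^ℓ)(2^ℓ + q^ℓ) ⋯ (n^ℓ + q^ℓ) equals 1. -/

import Mathlib

theorem stmt5 (k s ℓ p q n : ℕ) (hk : k.Prime) (hkodd : Odd k) (hs : 0 < s)
    (hℓ : ℓ = k ^ s) (hp : p.Prime) (hq : 0 < q) (hpq : q < p) (hpk : p ≠ k)
    (hndvd : ¬ k ∣ (p - 1)) (hn : 0 < n) (h1 : p - q ≤ n) (h2 : n ≤ 2 * p - q - 1) :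
    padicValNat p (∏ a ∈ Finset.Icc 1 n, (a ^ ℓ + q ^ ℓ)) = 1 := by
  haveI : Fact p.Prime := ⟨hp⟩
  have hℓodd : Odd ℓ := by rw [hℓ]; exact hkodd.pow
  have hℓpos : 0 < ℓ := hℓodd.pos
  have hqp : 0 < p - q := Nat.sub_pos_of_lt hpq
  have hmem : p - q ∈ Finset.Icc 1 n := Finset.mem_Icc.2 ⟨hqp, h1⟩
  have hcop : Nat.Coprime (p - 1) ℓ := by
    rw [hℓ]
    exact (((Nat.Prime.coprime_iff_not_dvd hk).2 hndvd).pow_left s).symm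
  -- key: for a in Icc, p ∣ a^ℓ + q^ℓ → a = p - q
  have key : ∀ a ∈ Finset.Icc 1 n, p ∣ a ^ ℓ + q ^ ℓ → a = p - q := by
    intro a ha hdvd
    obtain ⟨ha1, ha2⟩ := Finset.mem_Icc.1 ha
    have hq0 : ((q : ZMod p)) ≠ 0 := by
      rw [Ne, ZMod.natCast_eq_zero_iff]
      exact Nat.not_dvd_of_pos_of_lt hq hpq
    have h0 : ((a : ZMod p)) ^ ℓ + ((q : ZMod p)) ^ ℓ = 0 := by
      have := (ZMod.natCast_eq_zero_iff (a ^ ℓ + q ^ ℓ) p).2 hdvd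
      push_cast at this
      exact this
    have heq : ((a : ZMod p)) ^ ℓ = (-(q : ZMod p)) ^ ℓ := by
      rw [Odd.neg_pow hℓodd]
      linear_combination h0
    have ha0 : ((a : ZMod p)) ≠ 0 := by
      intro h
      rw [h] at heq
      have : ((q : ZMod p)) ^ ℓ = 0 := by
        rw [Odd.neg_pow hℓodd] at heq
        simpa [hℓpos.ne'] using heq.symm
      exact hq0 (pow_eq_zero_iff hℓpos.ne' |>.1 this)
    have hnq0 : (-(q : ZMod p)) ≠ 0 := neg_ne_zero.2 hq0
    have hcard : Nat.Coprime (Nat.card (ZMod p)ˣ) ℓ := by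
      rwa [Nat.card_eq_fintype_card, ZMod.card_units_eq_totient, Nat.totient_prime hp]
    have hinj := (powCoprime hcard).injective
    have : Units.mk0 _ ha0 = Units.mk0 _ hnq0 := by
      apply hinj
      ext
      simpa [powCoprime] using heq
    have haq : (a : ZMod p) = -(q : ZMod p) := by
      simpa using congrArg Units.val this
    have : ((a + q : ℕ) : ZMod p) = 0 := by push_cast [haq]; ring
    have hdvd2 : p ∣ a + q := (ZMod.natCast_eq_zero_iff _ _).1 this
    have hle : p ≤ a + q := Nat.le_of_dvd (by omega) hdvd2
    have hd3 : p ∣ a + q - p := Nat.dvd_sub hdvd2 dvd_rfl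
    rcases Nat.eq_zero_or_pos (a + q - p) with h0' | h0'
    · omega
    · have := Nat.le_of_dvd h0' hd3
      omega
  have hℓnd : ¬ p ∣ ℓ := by
    rw [hℓ]
    intro h
    exact hpk ((Nat.prime_dvd_prime_iff_eq hp hk).1 (hp.dvd_of_dvd_pow h))
  have hterm : padicValNat p ((p - q) ^ ℓ + q ^ ℓ) = 1 := by
    rcases eq_or_ne p 2 with h2' | hne2
    · have hq1 : q = 1 := by omega
      subst h2'; subst hq1
      norm_num
    · have hoddp : Odd p := hp.odd_of_ne_two hne2
      have hdvd : p ∣ (p - q) + q := by rw [Nat.sub_add_cancel hpq.le]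
      have hnd : ¬ p ∣ (p - q) := Nat.not_dvd_of_pos_of_lt hqp (by omega)
      rw [padicValNat.pow_add_pow hoddp hdvd hnd hℓodd,
        Nat.sub_add_cancel hpq.le, padicValNat.self hp.one_lt,
        padicValNat.eq_zero_of_not_dvd hℓnd]
  rw [← Finset.mul_prod_erase _ _ hmem]
  have hpos : ∀ a, 0 < a ^ ℓ + q ^ ℓ := fun a => by positivity
  have hrest : ¬ p ∣ ∏ a ∈ (Finset.Icc 1 n).erase (p - q), (a ^ ℓ + q ^ ℓ) := by
    intro h
    obtain ⟨a, ha, hda⟩ := (hp.prime.dvd_finset_prod_iff _).1 h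
    obtain ⟨hane, hamem⟩ := Finset.mem_erase.1 ha
    exact hane (key a hamem hda)
  rw [padicValNat.mul (hpos _).ne' (Finset.prod_pos fun a _ => hpos a).ne',
    hterm, padicValNat.eq_zero_of_not_dvd hrest]
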